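/- For a set of k rooted binary trees G_1,...,G_k, the number of distinct bipartitions (L_l, L_r) of the union of their leaf sets that are compatible with all trees (i.e., for each tree G_i, either all leaves of G_i lie in L_l, or all lie in L_r, or the leaves of the left subtree of G_i lie in one part and the leaves of the right subtree in the other) is at most 4^k/2 - 1. -/

import Mathlib

inductive BTree (α : Type) where
  | leaf : α → BTree α
  | node : BTree α → BTree α → BTree α
deriving DecidableEq

namespace BTree

variable {α : Type} [DecidableEq α] {σ : Type} [DecidableEq σ] {γ : Type} [DecidableEq γ]

/-- leaf (label) set of a tree -/
def leaves : BTree α → Finset α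
  | leaf a => {a}
  | node l r => leaves l ∪ leaves r

/-- the leaf labels are pairwise distinct -/
def nodupLeaves : BTree α → Prop
  | leaf _ => True
  | node l r => nodupLeaves l ∧ nodupLeaves r ∧ Disjoint (leaves l) (leaves r)

/-- the (unordered) bipartition `(Ll, Lr)` is compatible with the tree:
the whole leaf set lies in one part, or the leaf sets of the two root child
subtrees lie in opposite parts. -/
def compatible : BTree α → Finset α → Finset α → Prop
  | leaf a, Ll, Lr => a ∈ Ll ∨ a ∈ Lr
  | node l r, Ll, Lr =>
      leaves l ∪ leaves r ⊆ Ll ∨ leaves l ∪ leaves r ⊆ Lr ∨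
      (leaves l ⊆ Ll ∧ leaves r ⊆ Lr) ∨ (leaves l ⊆ Lr ∧ leaves r ⊆ Ll)

/-- union of the leaf sets of a list of trees -/
def unionLeaves (Gs : List (BTree α)) : Finset α :=
  Gs.foldr (fun g acc => leaves g ∪ acc) ∅

/-- `(Ll, Lr)` is a bipartition of the union of the leaf sets (both parts
nonempty) compatible with every tree in the list. -/
def isCompBip (Gs : List (BTree α)) (Ll Lr : Finset α) : Prop :=
  Ll ∪ Lr = unionLeaves Gs ∧ Disjoint Ll Lr ∧ Ll.Nonempty ∧ Lr.Nonempty ∧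
    ∀ G ∈ Gs, compatible G Ll Lr

/-- restriction `G|_L` : remove the leaves not in `L` and suppress the
resulting degree-2 nodes; `none` if no leaf of `G` lies in `L`. -/
def restrict : BTree α → Finset α → Option (BTree α)
  | leaf a, L => if a ∈ L then some (leaf a) else none
  | node l r, L =>
      match restrict l L, restrict r L with
      | some l', some r' => some (node l' r')
      | some l', none => some l'
      | none, some r' => some r'
      | none, none => none

/-- isomorphism of rooted leaf-labeled trees (children are unordered) -/
inductive Iso : BTree α → BTree α → Prop
  | leaf (a : α) : Iso (leaf a) (leaf a)
  | node {l r l' r' : BTree α} : Iso l l' → Iso r r' → Iso (node l r) (node l' r')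
  | swap {l r l' r' : BTree α} : Iso l r' → Iso r l' → Iso (node l r) (node l' r')

/-- `G` displays `G'` : the restriction of `G` to the leaves of `G'` is
isomorphic to `G'` (preserving leaf labels). -/
def displays (G G' : BTree α) : Prop :=
  ∃ t, restrict G (leaves G') = some t ∧ Iso t G'

/-- `Subtree t T` : `t` is a complete rooted subtree of `T` (i.e. `t = T[x]`
for some node `x` of `T`).  Equivalently, the root of `T` is a (weak)
ancestor of the root of `t`. -/
inductive Subtree : BTree α → BTree α → Prop
  | refl (t : BTree α) : Subtree t t
  | left {t l r : BTree α} : Subtree t l → Subtree t (node l r)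
  | right {t l r : BTree α} : Subtree t r → Subtree t (node l r)

/-- two nodes (complete subtrees) are separated: neither is a (weak)
ancestor of the other -/
def separated (u v : BTree α) : Prop := ¬ Subtree u v ∧ ¬ Subtree v u

/-- the subtree rooted at the lowest common ancestor of the leaf set `L` -/
def lcaSub : BTree α → Finset α → BTree α
  | leaf a, _ => leaf a
  | node l r, L =>
      if L ⊆ leaves l then lcaSub l L
      else if L ⊆ leaves r then lcaSub r L
      else node l r

/-- `T1` and `T2` induce the same rooted triplet topology on `{a, b, c}` -/
def sameTriplet (T1 T2 : BTree α) (a b c : α) : Prop :=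
  ∃ t1 t2, restrict T1 {a, b, c} = some t1 ∧ restrict T2 {a, b, c} = some t2 ∧ Iso t1 t2

/-- `GTR` is triplet respecting w.r.t. `GInit` and the family `Gs` : for any
three leaves taken from three distinct trees of `Gs`, `GInit` and `GTR`
induce the same rooted triplet topology. -/
def tripletRespecting (GInit GTR : BTree α) (Gs : List (BTree α)) : Prop :=
  ∀ G1 ∈ Gs, ∀ G2 ∈ Gs, ∀ G3 ∈ Gs, G1 ≠ G2 → G1 ≠ G3 → G2 ≠ G3 →
    ∀ a ∈ leaves G1, ∀ b ∈ leaves G2, ∀ c ∈ leaves G3, sameTriplet GInit GTR a b c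

/-- at least two (distinct) trees of `Gs` are subtrees of `t` : `|𝒢(t)| ≥ 2` -/
def atLeastTwo (Gs : List (BTree α)) (t : BTree α) : Prop :=
  ∃ Gi ∈ Gs, ∃ Gj ∈ Gs, Gi ≠ Gj ∧ Subtree Gi t ∧ Subtree Gj t

/-- `Graft T' T R` : `R` is obtained from `T` by grafting `T'` at some node
`x*` of `T`, i.e. subdividing the edge above `x*` (or adding a new root if
`x*` is the root) and attaching `T'` as the new sibling of `x*`. -/
inductive Graft (T' : BTree α) : BTree α → BTree α → Prop
  | atRootL (T : BTree α) : Graft T' T (node T' T)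
  | atRootR (T : BTree α) : Graft T' T (node T T')
  | left {l r g : BTree α} : Graft T' l g → Graft T' (node l r) (node g r)
  | right {l r g : BTree α} : Graft T' r g → Graft T' (node l r) (node l g)

/-- number of edges from the root of `u` down to the node `v`, if `v` is a
node (complete subtree) of `u` -/
def edist : BTree σ → BTree σ → Option ℕ
  | leaf a, v => if leaf a = v then some 0 else none
  | node l r, v =>
      if node l r = v then some 0 else
      match edist l v, edist r v with
      | some n, _ => some (n + 1)
      | none, some n => some (n + 1)
      | none, none => none

/-- number of nodes strictly between an ancestor `u` and a descendant `v` -/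
def inter (u v : BTree σ) : ℕ := (edist u v).getD 1 - 1

/-- node (`lca`) of the species tree `S` associated to a set `L` of genes -/
def specOf (S : BTree σ) (s : γ → σ) (L : Finset γ) : BTree σ := lcaSub S (L.image s)

/-- the species-tree node `s(x)` associated with a gene-tree node `x`
(lca of the species of the leaves below `x`) -/
def spec (S : BTree σ) (s : γ → σ) (t : BTree γ) : BTree σ := specOf S s (leaves t)

/-- the local LCA-reconciliation cost of a node whose own mapping is `su`
and whose children map to `sl` and `sr` -/
def localCost (su sl sr : BTree σ) : ℕ :=
  inter su sl + inter su sr +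
    (if su = sl ∧ su = sr then 1 else if su = sl ∨ su = sr then 2 else 0)

/-- number of duplication nodes of the LCA-reconciliation -/
def dupCount (S : BTree σ) (s : γ → σ) : BTree γ → ℕ
  | leaf _ => 0
  | node l r =>
      dupCount S s l + dupCount S s r +
      (if spec S s (node l r) = spec S s l ∨ spec S s (node l r) = spec S s r then 1 else 0)

/-- minimum number of losses of the LCA-reconciliation: for each edge `(x,c)`,
`inter(s(x), s(c))` losses, plus one more loss for each child `c` of a
duplication node `x` with `s(c) ≠ s(x)` -/
def lossCount (S : BTree σ) (s : γ → σ) : BTree γ → ℕ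
  | leaf _ => 0
  | node l r =>
      lossCount S s l + lossCount S s r +
      (if spec S s (node l r) = spec S s l ∨ spec S s (node l r) = spec S s r then
        (inter (spec S s (node l r)) (spec S s l) +
          if spec S s l = spec S s (node l r) then 0 else 1) +
        (inter (spec S s (node l r)) (spec S s r) +
          if spec S s r = spec S s (node l r) then 0 else 1)
      else
        inter (spec S s (node l r)) (spec S s l) + inter (spec S s (node l r)) (spec S s r))

/-- sum over all internal nodes of the local LCA-reconciliation costs -/
def totalLocal (S : BTree σ) (s : γ → σ) : BTree γ → ℕ
  | leaf _ => 0
  | node l r =>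
      totalLocal S s l + totalLocal S s r +
      localCost (spec S s (node l r)) (spec S s l) (spec S s r)

/-- `G` is a supertree for `Gs` : a tree on the union of the leaf sets
(each leaf once) displaying every tree of `Gs` -/
def isSupertree (Gs : List (BTree γ)) (G : BTree γ) : Prop :=
  leaves G = unionLeaves Gs ∧ nodupLeaves G ∧ ∀ Gi ∈ Gs, displays G Gi

/-- `MinSGT` : minimum LCA-reconciliation cost over all supertrees -/
noncomputable def reconMin (S : BTree σ) (s : γ → σ) (Gs : List (BTree γ)) : ℕ :=
  sInf {c | ∃ G : BTree γ, isSupertree Gs G ∧ totalLocal S s G = c}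

/-- restrictions `G_i|_L` of the trees of the list (dropping empty ones) -/
def restrictList (Gs : List (BTree γ)) (L : Finset γ) : List (BTree γ) :=
  Gs.filterMap fun G => restrict G L

/-- the four possible ordered choices for distributing a tree into the two
parts of a bipartition: whole tree left, whole tree right, left subtree
left & right subtree right, left subtree right & right subtree left -/
def pick : BTree α → ℕ → Finset α × Finset α
  | G, 0 => (leaves G, ∅)
  | G, 1 => (∅, leaves G)
  | node l r, 2 => (leaves l, leaves r)
  | node l r, _ => (leaves r, leaves l)
  | G, _ => (∅, leaves G)

/-- left part produced by a distribution `f` of choices -/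
def partsLeft (Gs : List (BTree α)) (f : Fin Gs.length → Fin 4) : Finset α :=
  Finset.univ.biUnion fun i => (pick (Gs.get i) (f i).val).1

/-- right part produced by a distribution `f` of choices -/
def partsRight (Gs : List (BTree α)) (f : Fin Gs.length → Fin 4) : Finset α :=
  Finset.univ.biUnion fun i => (pick (Gs.get i) (f i).val).2

/-- the complete subtree at a position (path from the root) -/
def subtreeAt : BTree α → List Bool → Option (BTree α)
  | t, [] => some t
  | leaf _, _ :: _ => none
  | node l _, false :: p => subtreeAt l p
  | node _ r, true :: p => subtreeAt r p

/-- the set of positions of internal nodes -/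
def internalPos : BTree α → Finset (List Bool)
  | leaf _ => ∅
  | node l r =>
      insert [] ((internalPos l).image (List.cons false) ∪
        (internalPos r).image (List.cons true))

end BTree

/-- labeled gene trees: each internal node carries `true` (Dup) or `false` (Spec) -/
inductive LTree (α : Type) where
  | leaf : α → LTree α
  | node : Bool → LTree α → LTree α → LTree α
deriving DecidableEq

namespace LTree

variable {α : Type} [DecidableEq α]

def leaves : LTree α → Finset α
  | leaf a => {a}
  | node _ l r => leaves l ∪ leaves r

/-- underlying unlabeled tree -/
def shape : LTree α → BTree α
  | leaf a => BTree.leaf a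
  | node _ l r => BTree.node (shape l) (shape r)

/-- the event label of the root (`none` for a leaf) -/
def rootEv : LTree α → Option Bool
  | leaf _ => none
  | node e _ _ => some e

inductive Subtree : LTree α → LTree α → Prop
  | refl (t : LTree α) : Subtree t t
  | left {t l r : LTree α} {e : Bool} : Subtree t l → Subtree t (node e l r)
  | right {t l r : LTree α} {e : Bool} : Subtree t r → Subtree t (node e l r)

/-- the subtree rooted at the lowest common ancestor of the leaf set `L` -/
def lcaSub : LTree α → Finset α → LTree α
  | leaf a, _ => leaf a
  | node e l r, L =>
      if L ⊆ leaves l then lcaSub l L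
      else if L ⊆ leaves r then lcaSub r L
      else node e l r

/-- `G` displays `G'` (topologically, ignoring labels) -/
def displaysL (G G' : LTree α) : Prop := BTree.displays (shape G) (shape G')

/-- `(G, ev_G)` is label-compatible with `(G', ev_{G'})` : every internal
node `x'` of `G'` has the same event label as `lca_G(L(x'))` -/
def labelCompatible (G G' : LTree α) : Prop :=
  ∀ (e : Bool) (l r : LTree α), Subtree (node e l r) G' →
    rootEv (lcaSub G (leaves (node e l r))) = some e

end LTree

section Aux

open BTree

variable {α : Type} [DecidableEq α]

theorem leaves_nonempty' (G : BTree α) : (BTree.leaves G).Nonempty := by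
  induction G with
  | leaf a => exact ⟨a, by simp [BTree.leaves]⟩
  | node l r ihl ihr =>
      obtain ⟨a, ha⟩ := ihl
      exact ⟨a, by simp [BTree.leaves, ha]⟩

/-- canonical choice index for a tree w.r.t. an ordered bipartition -/
def bchoice (G : BTree α) (Ll Lr : Finset α) : Fin 4 :=
  if BTree.leaves G ⊆ Ll then 0 else if BTree.leaves G ⊆ Lr then 1
  else match G with
    | .leaf _ => 0
    | .node l _ => if BTree.leaves l ⊆ Ll then 2 else 3

theorem unionLeaves_cons' (G : BTree α) (Gs : List (BTree α)) :
    BTree.unionLeaves (G :: Gs) = BTree.leaves G ∪ BTree.unionLeaves Gs := rfl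

theorem mem_unionLeaves' {Gs : List (BTree α)} {a : α} :
    a ∈ BTree.unionLeaves Gs ↔ ∃ G ∈ Gs, a ∈ BTree.leaves G := by
  induction Gs with
  | nil => simp [BTree.unionLeaves]
  | cons G Gs ih => simp [unionLeaves_cons', ih]

theorem pick_zero' (G : BTree α) : BTree.pick G ((0 : Fin 4)).val = (BTree.leaves G, ∅) := by cases G <;> rfl
theorem pick_one' (G : BTree α) : BTree.pick G ((1 : Fin 4)).val = (∅, BTree.leaves G) := by cases G <;> rfl
theorem pick_two' (l r : BTree α) :
    BTree.pick (BTree.node l r) ((2 : Fin 4)).val = (BTree.leaves l, BTree.leaves r) := rfl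
theorem pick_three' (l r : BTree α) :
    BTree.pick (BTree.node l r) ((3 : Fin 4)).val = (BTree.leaves r, BTree.leaves l) := rfl

theorem pick_spec' {G : BTree α} {Ll Lr : Finset α}
    (hc : BTree.compatible G Ll Lr) (hd : Disjoint Ll Lr) :
    (BTree.pick G (bchoice G Ll Lr).val).1 ⊆ Ll ∧
    (BTree.pick G (bchoice G Ll Lr).val).2 ⊆ Lr ∧
    BTree.leaves G ⊆
      (BTree.pick G (bchoice G Ll Lr).val).1 ∪ (BTree.pick G (bchoice G Ll Lr).val).2 := by
  cases G with
  | leaf a =>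
      by_cases h1 : BTree.leaves (BTree.leaf a) ⊆ Ll
      · rw [show bchoice (BTree.leaf a) Ll Lr = 0 from if_pos h1, pick_zero']
        exact ⟨h1, by simp, by simp⟩
      · have h2 : BTree.leaves (BTree.leaf a) ⊆ Lr := by
          rcases hc with h | h
          · exact absurd (by simp [BTree.leaves, h]) h1
          · simp [BTree.leaves, h]
        rw [show bchoice (BTree.leaf a) Ll Lr = 1 by rw [bchoice]; rw [if_neg h1, if_pos h2],
          pick_one']
        exact ⟨by simp, h2, by simp⟩
  | node l r =>
      by_cases h1 : BTree.leaves (BTree.node l r) ⊆ Ll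
      · rw [show bchoice (BTree.node l r) Ll Lr = 0 from if_pos h1, pick_zero']
        exact ⟨h1, by simp, by simp⟩
      by_cases h2 : BTree.leaves (BTree.node l r) ⊆ Lr
      · rw [show bchoice (BTree.node l r) Ll Lr = 1 by
          rw [bchoice]; rw [if_neg h1, if_pos h2], pick_one']
        exact ⟨by simp, h2, by simp⟩
      have hc' : (BTree.leaves l ⊆ Ll ∧ BTree.leaves r ⊆ Lr) ∨
          (BTree.leaves l ⊆ Lr ∧ BTree.leaves r ⊆ Ll) := by
        rcases hc with h | h | h | h
        · exact absurd h h1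
        · exact absurd h h2
        · exact Or.inl h
        · exact Or.inr h
      by_cases h3 : BTree.leaves l ⊆ Ll
      · have h4 : BTree.leaves r ⊆ Lr := by
          rcases hc' with ⟨_, h⟩ | ⟨h, _⟩
          · exact h
          · obtain ⟨a, ha⟩ := leaves_nonempty' l
            exact absurd (h ha) (Finset.disjoint_left.mp hd (h3 ha))
        rw [show bchoice (BTree.node l r) Ll Lr = 2 by
          rw [bchoice]; rw [if_neg h1, if_neg h2, if_pos h3], pick_two']
        exact ⟨h3, h4, by simp [BTree.leaves]⟩
      · have h4 : BTree.leaves l ⊆ Lr ∧ BTree.leaves r ⊆ Ll := by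
          rcases hc' with ⟨h, _⟩ | h
          · exact absurd h h3
          · exact h
        rw [show bchoice (BTree.node l r) Ll Lr = 3 by
          rw [bchoice]; rw [if_neg h1, if_neg h2, if_neg h3], pick_three']
        refine ⟨h4.2, h4.1, ?_⟩
        simp only [BTree.leaves]
        rw [Finset.union_comm]

theorem parts_eq' {Gs : List (BTree α)} {Ll Lr : Finset α} (h : BTree.isCompBip Gs Ll Lr)
    (f : Fin Gs.length → Fin 4) (hf : ∀ i, f i = bchoice (Gs.get i) Ll Lr) :
    BTree.partsLeft Gs f = Ll ∧ BTree.partsRight Gs f = Lr := by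
  obtain ⟨hu, hd, hne1, hne2, hcomp⟩ := h
  have spec : ∀ i : Fin Gs.length,
      (BTree.pick (Gs.get i) (f i).val).1 ⊆ Ll ∧ (BTree.pick (Gs.get i) (f i).val).2 ⊆ Lr ∧
      BTree.leaves (Gs.get i) ⊆
        (BTree.pick (Gs.get i) (f i).val).1 ∪ (BTree.pick (Gs.get i) (f i).val).2 := by
    intro i
    rw [hf i]
    exact pick_spec' (hcomp _ (Gs.get_mem i)) hd
  have hmem : ∀ a : α, a ∈ Ll ∪ Lr → ∃ i : Fin Gs.length, a ∈ BTree.leaves (Gs.get i) := by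
    intro a ha
    rw [hu, mem_unionLeaves'] at ha
    obtain ⟨G, hG, haG⟩ := ha
    obtain ⟨i, rfl⟩ := List.mem_iff_get.mp hG
    exact ⟨i, haG⟩
  constructor
  · apply Finset.Subset.antisymm
    · intro a ha
      obtain ⟨i, _, hi⟩ := Finset.mem_biUnion.mp ha
      exact (spec i).1 hi
    · intro a ha
      obtain ⟨i, hi⟩ := hmem a (Finset.mem_union_left _ ha)
      have := (spec i).2.2 hi
      rw [Finset.mem_union] at this
      rcases this with h' | h'
      · exact Finset.mem_biUnion.mpr ⟨i, Finset.mem_univ _, h'⟩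
      · exact absurd ((spec i).2.1 h') (Finset.disjoint_left.mp hd ha)
  · apply Finset.Subset.antisymm
    · intro a ha
      obtain ⟨i, _, hi⟩ := Finset.mem_biUnion.mp ha
      exact (spec i).2.1 hi
    · intro a ha
      obtain ⟨i, hi⟩ := hmem a (Finset.mem_union_right _ ha)
      have := (spec i).2.2 hi
      rw [Finset.mem_union] at this
      rcases this with h' | h'
      · exact absurd ((spec i).1 h') (Finset.disjoint_right.mp hd ha)
      · exact Finset.mem_biUnion.mpr ⟨i, Finset.mem_univ _, h'⟩

theorem compatible_symm' {G : BTree α} {Ll Lr : Finset α} (h : BTree.compatible G Ll Lr) :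
    BTree.compatible G Lr Ll := by
  cases G <;> simp only [BTree.compatible] at h ⊢ <;> tauto

theorem isCompBip_symm' {Gs : List (BTree α)} {Ll Lr : Finset α}
    (h : BTree.isCompBip Gs Ll Lr) : BTree.isCompBip Gs Lr Ll :=
  ⟨by rw [Finset.union_comm]; exact h.1, h.2.1.symm, h.2.2.2.1, h.2.2.1,
    fun G hG => compatible_symm' (h.2.2.2.2 G hG)⟩

theorem bchoice_swap' {G : BTree α} {Ll Lr : Finset α}
    (hc : BTree.compatible G Ll Lr)
    (h : ¬(bchoice G Ll Lr = 0 ∨ bchoice G Ll Lr = 2)) :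
    bchoice G Lr Ll = 0 ∨ bchoice G Lr Ll = 2 := by
  push_neg at h
  obtain ⟨h0, h2⟩ := h
  have h1 : ¬ BTree.leaves G ⊆ Ll := fun hh => h0 (if_pos hh)
  by_cases hr : BTree.leaves G ⊆ Lr
  · left; exact if_pos hr
  · cases G with
    | leaf a => exact absurd (if_neg h1 |>.trans (if_neg hr)) h0
    | node l r =>
        have hll : ¬ BTree.leaves l ⊆ Ll := by
          intro hh
          apply h2
          rw [bchoice]; rw [if_neg h1, if_neg hr, if_pos hh]
        have hlr : BTree.leaves l ⊆ Lr := by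
          rcases hc with hh | hh | hh | hh
          · exact absurd hh h1
          · exact absurd hh hr
          · exact absurd hh.1 hll
          · exact hh.1
        right
        rw [bchoice]; rw [if_neg hr, if_neg h1, if_pos hlr]

theorem key' {G0 : BTree α} {Gs' : List (BTree α)} {Ll Lr : Finset α}
    (hbip : BTree.isCompBip (G0 :: Gs') Ll Lr)
    (hor : bchoice G0 Ll Lr = 0 ∨ bchoice G0 Ll Lr = 2) :
    ∃ bg : Bool × (Fin Gs'.length → Fin 4),
      bg ≠ (false, fun _ => 0) ∧
      BTree.partsLeft (G0 :: Gs') (Fin.cons (if bg.1 then 2 else 0) bg.2) = Ll ∧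
      BTree.partsRight (G0 :: Gs') (Fin.cons (if bg.1 then 2 else 0) bg.2) = Lr := by
  set f : Fin (G0 :: Gs').length → Fin 4 :=
    fun i => bchoice ((G0 :: Gs').get i) Ll Lr with hfdef
  have hext : (Fin.cons (α := fun _ => Fin 4)
      (if decide (bchoice G0 Ll Lr = 2) = true then 2 else 0)
      (fun i : Fin Gs'.length => f i.succ)) = f := by
    funext i
    refine Fin.cases ?_ ?_ i
    · rw [Fin.cons_zero]
      have hf0 : f (0 : Fin (Gs'.length + 1)) = bchoice G0 Ll Lr := rfl
      by_cases hc2 : bchoice G0 Ll Lr = 2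
      · simp [hc2, hf0]
      · have hc0 : bchoice G0 Ll Lr = 0 := hor.resolve_right hc2
        simp [hc2, hf0, hc0]
    · intro j
      rw [Fin.cons_succ]
  refine ⟨(decide (bchoice G0 Ll Lr = 2), fun i => f i.succ), ?_, ?_, ?_⟩
  · -- nonzero
    intro heq
    have hb : (decide (bchoice G0 Ll Lr = 2) : Bool) = false := congrArg Prod.fst heq
    have ht : (fun i : Fin Gs'.length => f i.succ) = fun _ => 0 := congrArg Prod.snd heq
    have hfz : f = fun _ => 0 := by
      rw [← hext, hb, ht]
      funext i
      refine Fin.cases ?_ ?_ i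
      · rw [Fin.cons_zero]; rfl
      · intro j; rw [Fin.cons_succ]
    have hpr := (parts_eq' hbip f fun i => rfl).2
    rw [hfz] at hpr
    have hempty : BTree.partsRight (G0 :: Gs') (fun _ => (0 : Fin 4)) = ∅ := by
      apply Finset.eq_empty_of_forall_notMem
      intro a ha
      obtain ⟨i, _, hi⟩ := Finset.mem_biUnion.mp ha
      rw [pick_zero'] at hi
      exact absurd hi (Finset.notMem_empty a)
    rw [hempty] at hpr
    obtain ⟨a, ha⟩ := hbip.2.2.2.1
    rw [← hpr] at ha
    exact absurd ha (Finset.notMem_empty a)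
  · show BTree.partsLeft (G0 :: Gs') (Fin.cons
        (if decide (bchoice G0 Ll Lr = 2) = true then 2 else 0)
        (fun i : Fin Gs'.length => f i.succ)) = Ll
    rw [hext]
    exact (parts_eq' hbip f fun i => rfl).1
  · show BTree.partsRight (G0 :: Gs') (Fin.cons
        (if decide (bchoice G0 Ll Lr = 2) = true then 2 else 0)
        (fun i : Fin Gs'.length => f i.succ)) = Lr
    rw [hext]
    exact (parts_eq' hbip f fun i => rfl).2

end Aux
/-- the number of distinct (unordered) bipartitions of the union
of the leaf sets compatible with all `k` input trees is at most `4^k/2 - 1`. -/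
theorem stmt0 {α : Type} [DecidableEq α] (Gs : List (BTree α)) :
    Set.ncard {p : Sym2 (Finset α) |
        ∃ Ll Lr : Finset α, p = s(Ll, Lr) ∧ BTree.isCompBip Gs Ll Lr} ≤
      4 ^ Gs.length / 2 - 1 := by
  classical
  cases Gs with
  | nil =>
      have hempty : {p : Sym2 (Finset α) |
          ∃ Ll Lr : Finset α, p = s(Ll, Lr) ∧ BTree.isCompBip ([] : List (BTree α)) Ll Lr}
          = ∅ := by
        ext p
        simp only [Set.mem_setOf_eq, Set.mem_empty_iff_false, iff_false, not_exists]
        rintro Ll Lr ⟨_, hu, _, ⟨a, ha⟩, _⟩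
        have : a ∈ Ll ∪ Lr := Finset.mem_union_left _ ha
        rw [hu] at this
        exact absurd this (Finset.notMem_empty a)
      rw [hempty, Set.ncard_empty]
      exact Nat.zero_le _
  | cons G0 Gs' =>
      set n := Gs'.length with hn
      set Ψ : Bool × (Fin n → Fin 4) → Sym2 (Finset α) := fun bg =>
        s(BTree.partsLeft (G0 :: Gs') (Fin.cons (if bg.1 then 2 else 0) bg.2),
          BTree.partsRight (G0 :: Gs') (Fin.cons (if bg.1 then 2 else 0) bg.2)) with hΨ
      set U : Set (Bool × (Fin n → Fin 4)) :=
        Set.univ \ {((false : Bool), fun _ => (0 : Fin 4))} with hU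
      have hsub : {p : Sym2 (Finset α) |
          ∃ Ll Lr : Finset α, p = s(Ll, Lr) ∧ BTree.isCompBip (G0 :: Gs') Ll Lr}
          ⊆ Ψ '' U := by
        rintro p ⟨Ll, Lr, rfl, hbip⟩
        by_cases hor : bchoice G0 Ll Lr = 0 ∨ bchoice G0 Ll Lr = 2
        · obtain ⟨bg, hbg, hL, hR⟩ := key' hbip hor
          exact ⟨bg, ⟨Set.mem_univ _, hbg⟩, by rw [hΨ]; simp only; rw [hL, hR]⟩
        · have hbip' := isCompBip_symm' hbip
          have hor' := bchoice_swap' (hbip.2.2.2.2 G0 (List.mem_cons_self)) hor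
          obtain ⟨bg, hbg, hL, hR⟩ := key' hbip' hor'
          refine ⟨bg, ⟨Set.mem_univ _, hbg⟩, ?_⟩
          rw [hΨ]; simp only; rw [hL, hR]
          exact Sym2.eq_swap
      have h1 := Set.ncard_le_ncard hsub ((U.toFinite.image Ψ))
      have h2 := Set.ncard_image_le (s := U) (f := Ψ) U.toFinite
      have h3 : U.ncard = 2 * 4 ^ n - 1 := by
        rw [hU, Set.ncard_diff_singleton_of_mem (Set.mem_univ _), Set.ncard_univ]
        congr 1
        simp [Nat.card_eq_fintype_card]
      have h4 : (4 : ℕ) ^ (n + 1) = 2 * (2 * 4 ^ n) := by ring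
      have hlen : (G0 :: Gs').length = n + 1 := rfl
      rw [hlen]
      omega
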